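/- Fix 0 < z1 < z3. The function h(z2) = z1*z2*log(z2/z1) - z1*z3*log(z3/z1) + z2*z3*log(z3/z2) vanishes at z2 = z1 and z2 = z3, is strictly increasing on (z1, z2^0) and strictly decreasing on (z2^0, z3), where log(z2^0) = [z3*log(z3) - z1*log(z1)]/(z3 - z1) - 1; consequently h(z2) > 0 for all z2 in the open interval (z1, z3). -/

import Mathlib

theorem stmt_12 (z1 z3 : ℝ) (hz1 : 0 < z1) (hz13 : z1 < z3) :
    let h : ℝ → ℝ := fun z2 => z1 * z2 * Real.log (z2 / z1) - z1 * z3 * Real.log (z3 / z1)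
      + z2 * z3 * Real.log (z3 / z2)
    let z20 : ℝ := Real.exp ((z3 * Real.log z3 - z1 * Real.log z1) / (z3 - z1) - 1)
    h z1 = 0 ∧ h z3 = 0 ∧ StrictMonoOn h (Set.Ioo z1 z20) ∧ StrictAntiOn h (Set.Ioo z20 z3)
      ∧ ∀ z2 ∈ Set.Ioo z1 z3, h z2 > 0 := by
  intro h z20
  have hz3 : (0:ℝ) < z3 := hz1.trans hz13
  have hz20 : (0:ℝ) < z20 := Real.exp_pos _
  have hlz20 : Real.log z20 = (z3 * Real.log z3 - z1 * Real.log z1) / (z3 - z1) - 1 :=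
    Real.log_exp _
  have hsub : (0:ℝ) < z3 - z1 := by linarith
  -- derivative of h
  have key : ∀ x : ℝ, 0 < x →
      HasDerivAt h ((z3 - z1) * (Real.log z20 - Real.log x)) x := by
    intro x hx
    have hx0 : x ≠ 0 := ne_of_gt hx
    have hd1 : HasDerivAt (fun y : ℝ => Real.log (y / z1)) ((x / z1)⁻¹ * (1 / z1)) x := by
      have h0 : HasDerivAt (fun y : ℝ => y / z1) (1 / z1) x := (hasDerivAt_id x).div_const z1
      exact (Real.hasDerivAt_log (div_ne_zero hx0 hz1.ne')).comp x h0
    have hd3 : HasDerivAt (fun y : ℝ => Real.log (z3 / y))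
        ((z3 / x)⁻¹ * (z3 * (-(x ^ 2)⁻¹))) x := by
      have h0 : HasDerivAt (fun y : ℝ => z3 / y) (z3 * (-(x ^ 2)⁻¹)) x := by
        simpa [div_eq_mul_inv] using (hasDerivAt_inv hx0).const_mul z3
      exact (Real.hasDerivAt_log (div_ne_zero hz3.ne' hx0)).comp x h0
    have hA : HasDerivAt (fun y : ℝ => z1 * y * Real.log (y / z1))
        (z1 * Real.log (x / z1) + (z1 * x) * ((x / z1)⁻¹ * (1 / z1))) x := by
      exact (((hasDerivAt_id x).const_mul z1).mul hd1).congr_deriv (by simp)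
    have hB : HasDerivAt (fun y : ℝ => y * z3 * Real.log (z3 / y))
        (z3 * Real.log (z3 / x) + (x * z3) * ((z3 / x)⁻¹ * (z3 * (-(x ^ 2)⁻¹)))) x := by
      exact (((hasDerivAt_id x).mul_const z3).mul hd3).congr_deriv (by simp)
    have hC := (hA.sub_const (z1 * z3 * Real.log (z3 / z1))).add hB
    refine HasDerivAt.congr_deriv hC ?_
    rw [Real.log_div hx0 hz1.ne', Real.log_div hz3.ne' hx0, hlz20]
    field_simp
    ring
  have hcont : ∀ s : Set ℝ, s ⊆ Set.Ioi 0 → ContinuousOn h s := fun s hs x hx =>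
    ((key x (hs hx)).differentiableAt.continuousAt).continuousWithinAt
  have hderiv : ∀ x : ℝ, 0 < x → deriv h x = (z3 - z1) * (Real.log z20 - Real.log x) :=
    fun x hx => (key x hx).deriv
  have gpos : ∀ x : ℝ, 0 < x → x < z20 → 0 < (z3 - z1) * (Real.log z20 - Real.log x) :=
    fun x hx hxz => mul_pos hsub (sub_pos.2 (Real.log_lt_log hx hxz))
  have gneg : ∀ x : ℝ, z20 < x → (z3 - z1) * (Real.log z20 - Real.log x) < 0 :=
    fun x hxz => mul_neg_of_pos_of_neg hsub (sub_neg.2 (Real.log_lt_log hz20 hxz))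
  have hz10 : h z1 = 0 := by
    show z1 * z1 * Real.log (z1 / z1) - z1 * z3 * Real.log (z3 / z1)
      + z1 * z3 * Real.log (z3 / z1) = 0
    rw [div_self hz1.ne', Real.log_one]; ring
  have hz30 : h z3 = 0 := by
    show z1 * z3 * Real.log (z3 / z1) - z1 * z3 * Real.log (z3 / z1)
      + z3 * z3 * Real.log (z3 / z3) = 0
    rw [div_self hz3.ne', Real.log_one]; ring
  have mono : ∀ a b : ℝ, 0 < a → b ≤ z20 → StrictMonoOn h (Set.Icc a b) := by
    intro a b ha hb
    apply strictMonoOn_of_deriv_pos (convex_Icc a b)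
      (hcont _ (fun x hx => lt_of_lt_of_le ha hx.1))
    intro x hx
    rw [interior_Icc] at hx
    have hx0 : 0 < x := ha.trans hx.1
    rw [hderiv x hx0]
    exact gpos x hx0 (lt_of_lt_of_le hx.2 hb)
  have anti : ∀ a b : ℝ, z20 ≤ a → StrictAntiOn h (Set.Icc a b) := by
    intro a b ha
    apply strictAntiOn_of_deriv_neg (convex_Icc a b)
      (hcont _ (fun x hx => lt_of_lt_of_le hz20 (ha.trans hx.1)))
    intro x hx
    rw [interior_Icc] at hx
    have hx0 : 0 < x := hz20.trans (lt_of_le_of_lt ha hx.1)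
    rw [hderiv x hx0]
    exact gneg x (lt_of_le_of_lt ha hx.1)
  refine ⟨hz10, hz30, ?_, ?_, ?_⟩
  · rcases le_or_gt z20 z1 with hle | hlt
    · have : Set.Ioo z1 z20 = ∅ := Set.Ioo_eq_empty (by linarith [hle])
      rw [this]; exact fun x hx => absurd hx (Set.notMem_empty x)
    · exact (mono z1 z20 hz1 le_rfl).mono Set.Ioo_subset_Icc_self
  · exact (anti z20 z3 le_rfl).mono Set.Ioo_subset_Icc_self
  · intro z2 hz2
    obtain ⟨h1, h2⟩ := hz2
    rcases lt_or_ge z2 z20 with hlt | hle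
    · have := (mono z1 z2 hz1 hlt.le) (Set.left_mem_Icc.2 (by linarith))
        (Set.right_mem_Icc.2 (by linarith)) h1
      linarith [hz10]
    · have := (anti z2 z3 hle) (Set.left_mem_Icc.2 (by linarith))
        (Set.right_mem_Icc.2 (by linarith)) h2
      linarith [hz30]
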